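/- Define g(x) = H^{s_β}(E_β(x)) for x∈ℝ (so g(x)=0 for x outside I_β). Then g satisfies the self-similarity functional equation g(x) = (β/2)(g(T₀(x)) + g(T₁(x))) for every x∈I_β. -/

import Mathlib

open MeasureTheory Filter Topology
open scoped ENNReal Classical

noncomputable section

/-- The symbolic space `{0,1}^ℕ`. -/
abbrev Sig : Type := ℕ → Bool

/-- The metric `d(a,b) = 2^{-sup{n : a₁⋯a_n = b₁⋯b_n}}` on `Sig`. -/
noncomputable instance : MetricSpace Sig := PiNat.metricSpace

instance (priority := 2000) : MeasurableSpace Sig := borel Sig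

instance : BorelSpace Sig := ⟨rfl⟩

/-- The cylinder set `[a₁⋯a_n]` determined by a word `w = a₁⋯a_n`. -/
def cyl (w : List Bool) : Set Sig := {b | ∀ i : Fin w.length, b i.1 = w.get i}

/-- `π_β(a) = Σ_{i=1}^∞ a_i β^{-i}`. -/
def piBeta (β : ℝ) (a : Sig) : ℝ := ∑' i : ℕ, (if a i then (1 : ℝ) else 0) * (β ^ (i + 1))⁻¹

/-- `I_β = [0, 1/(β-1)]`. -/
def Ibeta (β : ℝ) : Set ℝ := Set.Icc 0 (β - 1)⁻¹

/-- The set `E_β(x) = π_β⁻¹(x)` of β-expansions of `x`. -/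
def Ebeta (β : ℝ) (x : ℝ) : Set Sig := piBeta β ⁻¹' {x}

/-- `T_i(x) = βx - i` for `i = 0,1`. -/
def Tmap (β : ℝ) (b : Bool) (x : ℝ) : ℝ := β * x - (if b then 1 else 0)

/-- `T_{a₁⋯a_n} = T_{a_n} ∘ ⋯ ∘ T_{a₁}`. -/
def Tword (β : ℝ) (w : List Bool) (x : ℝ) : ℝ := w.foldl (fun y b => Tmap β b y) x

/-- `s_β = log(2/β)/log 2`. -/
def sBeta (β : ℝ) : ℝ := Real.log (2 / β) / Real.log 2

/-- `m` is the uniform `(1/2,1/2)` Bernoulli measure: every cylinder of depth `n`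
has measure `2^{-n}`. -/
def bernoulliCylProp (m : Measure Sig) : Prop :=
  ∀ w : List Bool, m (cyl w) = (2 : ℝ≥0∞)⁻¹ ^ w.length

/-! ### Auxiliary material -/

open scoped NNReal

/-- Prepending a bit to a sequence. -/
def consB (b : Bool) (a : Sig) : Sig := fun n => match n with
  | 0 => b
  | n + 1 => a n

/-- Dropping the first bit of a sequence. -/
def tailB (a : Sig) : Sig := fun n => a (n + 1)

lemma tailB_consB (b : Bool) (a : Sig) : tailB (consB b a) = a := rfl

lemma consB_tailB {a : Sig} {b : Bool} (h : a 0 = b) : consB b (tailB a) = a := by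
  funext n; cases n with
  | zero => exact h.symm
  | succ n => rfl

lemma summable_piBeta {β : ℝ} (hβ : 1 < β) (a : Sig) :
    Summable (fun i : ℕ => (if a i then (1 : ℝ) else 0) * (β ^ (i + 1))⁻¹) := by
  have h0 : (0:ℝ) < β := by linarith
  have hinv : β⁻¹ < 1 := by
    rw [inv_lt_one_iff₀]; right; exact hβ
  have hge : Summable (fun i : ℕ => β⁻¹ * β⁻¹ ^ i) :=
    (summable_geometric_of_lt_one (by positivity) hinv).mul_left _
  apply Summable.of_nonneg_of_le _ _ hge
  · intro i; positivity
  · intro i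
    have : (β ^ (i+1))⁻¹ = β⁻¹ * β⁻¹ ^ i := by
      rw [← inv_pow, pow_succ']
    rw [this]
    rcases (a i) with _ | _ <;> simp <;> positivity

lemma piBeta_consB {β : ℝ} (hβ : 1 < β) (b : Bool) (a : Sig) :
    piBeta β (consB b a) = β⁻¹ * ((if b then (1:ℝ) else 0) + piBeta β a) := by
  have h0 : (0:ℝ) < β := by linarith
  have hsum := summable_piBeta hβ (consB b a)
  rw [piBeta, hsum.tsum_eq_zero_add]
  have h1 : ∀ n : ℕ, (if consB b a (n+1) then (1:ℝ) else 0) * (β ^ (n + 1 + 1))⁻¹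
      = β⁻¹ * ((if a n then (1:ℝ) else 0) * (β ^ (n + 1))⁻¹) := by
    intro n
    show (if a n then (1:ℝ) else 0) * (β ^ (n + 2))⁻¹ = _
    rw [pow_succ, mul_inv]
    ring
  simp only [h1]
  rw [tsum_mul_left]
  show (if b then (1:ℝ) else 0) * (β ^ 1)⁻¹ + β⁻¹ * piBeta β a = _
  rw [pow_one]; ring

lemma Ebeta_split {β : ℝ} (hβ : 1 < β) (x : ℝ) (b : Bool) :
    Ebeta β x ∩ {c : Sig | c 0 = b} = consB b '' Ebeta β (Tmap β b x) := by
  have h0 : (β:ℝ) ≠ 0 := by positivity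
  ext c
  constructor
  · rintro ⟨hc, h0c⟩
    refine ⟨tailB c, ?_, consB_tailB h0c⟩
    have hc' : piBeta β c = x := hc
    rw [← consB_tailB h0c, piBeta_consB hβ] at hc'
    show piBeta β (tailB c) = Tmap β b x
    rw [Tmap]
    field_simp at hc'
    linarith [hc']
  · rintro ⟨a, ha, rfl⟩
    have ha' : piBeta β a = Tmap β b x := ha
    constructor
    · show piBeta β (consB b a) = x
      rw [piBeta_consB hβ, ha', Tmap]
      field_simp
      ring
    · rfl

lemma dist_le_one (a a' : Sig) : dist a a' ≤ 1 := by
  have : a' ∈ PiNat.cylinder a 0 := by simp [PiNat.mem_cylinder_iff]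
  rw [dist_comm]; simpa using PiNat.mem_cylinder_iff_dist_le.1 this

lemma lipschitz_consB (b : Bool) : LipschitzWith 2⁻¹ (consB b) := by
  apply LipschitzWith.of_dist_le_mul
  intro a a'
  rcases eq_or_ne a a' with rfl | hne
  · simp
  have hd : dist a a' = (1/2 : ℝ) ^ PiNat.firstDiff a a' := PiNat.dist_eq_of_ne hne
  have hmem : consB b a' ∈ PiNat.cylinder (consB b a) (PiNat.firstDiff a a' + 1) := by
    rw [PiNat.mem_cylinder_iff]
    intro i hi
    match i with
    | 0 => rfl
    | k + 1 =>
      show a' k = a k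
      exact (PiNat.apply_eq_of_lt_firstDiff (by omega)).symm
  have := PiNat.mem_cylinder_iff_dist_le.1 hmem
  calc dist (consB b a) (consB b a') = dist (consB b a') (consB b a) := dist_comm _ _
    _ ≤ (1/2 : ℝ) ^ (PiNat.firstDiff a a' + 1) := this
    _ = (2⁻¹ : ℝ≥0) * dist a a' := by
        rw [hd, pow_succ]; push_cast; ring

lemma lipschitz_tailB : LipschitzWith 2 tailB := by
  apply LipschitzWith.of_dist_le_mul
  intro a a'
  rcases eq_or_ne (tailB a) (tailB a') with he | hne
  · rw [he]; simp
  have hne' : a ≠ a' := by rintro rfl; exact hne rfl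
  have hd : dist a a' = (1/2 : ℝ) ^ PiNat.firstDiff a a' := PiNat.dist_eq_of_ne hne'
  rcases Nat.eq_zero_or_pos (PiNat.firstDiff a a') with h0 | hpos
  · calc dist (tailB a) (tailB a') ≤ 1 := dist_le_one _ _
      _ ≤ (2 : ℝ≥0) * dist a a' := by rw [hd, h0]; norm_num
  obtain ⟨m, hm⟩ : ∃ m, PiNat.firstDiff a a' = m + 1 := ⟨_, (Nat.succ_pred_eq_of_pos hpos).symm⟩
  have hmem : tailB a' ∈ PiNat.cylinder (tailB a) m := by
    rw [PiNat.mem_cylinder_iff]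
    intro i hi
    show a' (i+1) = a (i+1)
    exact (PiNat.apply_eq_of_lt_firstDiff (by omega)).symm
  have := PiNat.mem_cylinder_iff_dist_le.1 hmem
  calc dist (tailB a) (tailB a') = dist (tailB a') (tailB a) := dist_comm _ _
    _ ≤ (1/2 : ℝ) ^ m := this
    _ = (2 : ℝ≥0) * dist a a' := by
        rw [hd, hm, pow_succ]; push_cast; ring

lemma haus_consB_image {s : ℝ} (hs : 0 ≤ s) (b : Bool) (A : Set Sig) :
    μH[s] (consB b '' A) = ((2 : ℝ≥0∞) ^ s)⁻¹ * μH[s] A := by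
  have h2top : (2 : ℝ≥0∞) ^ s ≠ ⊤ := ENNReal.rpow_ne_top_of_nonneg hs (by norm_num)
  have h2ne : (2 : ℝ≥0∞) ^ s ≠ 0 := (ENNReal.rpow_pos (by norm_num) (by norm_num)).ne'
  have h1 : μH[s] (consB b '' A) ≤ ((2 : ℝ≥0∞) ^ s)⁻¹ * μH[s] A := by
    have := (lipschitz_consB b).hausdorffMeasure_image_le hs A
    have hc : ((2⁻¹ : ℝ≥0) : ℝ≥0∞) ^ s = ((2 : ℝ≥0∞) ^ s)⁻¹ := by
      rw [ENNReal.coe_inv (by norm_num), ENNReal.inv_rpow]; norm_num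
    rwa [hc] at this
  have h2 : μH[s] A ≤ (2 : ℝ≥0∞) ^ s * μH[s] (consB b '' A) := by
    have htail : tailB '' (consB b '' A) = A := by
      rw [← Set.image_comp]
      have : tailB ∘ consB b = id := rfl
      rw [this, Set.image_id]
    have := lipschitz_tailB.hausdorffMeasure_image_le hs (consB b '' A)
    rw [htail] at this
    simpa using this
  refine le_antisymm h1 ?_
  calc ((2 : ℝ≥0∞) ^ s)⁻¹ * μH[s] A
      ≤ ((2 : ℝ≥0∞) ^ s)⁻¹ * ((2 : ℝ≥0∞) ^ s * μH[s] (consB b '' A)) :=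
        mul_le_mul_right h2 _
    _ = (((2 : ℝ≥0∞) ^ s)⁻¹ * (2 : ℝ≥0∞) ^ s) * μH[s] (consB b '' A) := by ring
    _ = μH[s] (consB b '' A) := by rw [ENNReal.inv_mul_cancel h2ne h2top, one_mul]

lemma const_eq {β : ℝ} (hβ1 : 1 < β) (hβ2 : β < 2) :
    ((2 : ℝ≥0∞) ^ sBeta β)⁻¹ = ENNReal.ofReal (β / 2) := by
  have hb0 : (0:ℝ) < β := by linarith
  have h2s : ((2:ℝ) ^ sBeta β) = 2 / β := by
    rw [Real.rpow_def_of_pos (by norm_num), sBeta]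
    rw [mul_comm, div_mul_cancel₀ _ (Real.log_ne_zero_of_pos_of_ne_one (by norm_num) (by norm_num))]
    exact Real.exp_log (by positivity)
  have : (2 : ℝ≥0∞) ^ sBeta β = ENNReal.ofReal (2 / β) := by
    rw [← h2s, ← ENNReal.ofReal_rpow_of_pos (by norm_num)]
    norm_num
  rw [this, ← ENNReal.ofReal_inv_of_pos (by positivity)]
  congr 1
  rw [inv_div]

lemma sBeta_nonneg {β : ℝ} (hβ1 : 0 < β) (hβ2 : β < 2) : 0 ≤ sBeta β := by
  apply div_nonneg
  · apply Real.log_nonneg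
    rw [le_div_iff₀ hβ1]; linarith
  · exact Real.log_nonneg (by norm_num)

/-- The function `g(x) = H^{s_β}(E_β(x))` satisfies the self-similarity
equation `g(x) = (β/2)(g(T₀(x)) + g(T₁(x)))` for every `x ∈ I_β`. -/
theorem stmt4 (β : ℝ) (hβ : β ∈ Set.Ioo (1 : ℝ) 2) :
    ∀ x ∈ Ibeta β,
      μH[sBeta β] (Ebeta β x)
        = ENNReal.ofReal (β / 2) *
            (μH[sBeta β] (Ebeta β (Tmap β false x))
              + μH[sBeta β] (Ebeta β (Tmap β true x))) := by
  obtain ⟨hβ1, hβ2⟩ := hβ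
  intro x _
  have hs : 0 ≤ sBeta β := sBeta_nonneg (by linarith) hβ2
  set S : Set Sig := {c : Sig | c 0 = false} with hS
  have hSopen : IsOpen S := by
    rw [Metric.isOpen_iff]
    intro c hc
    refine ⟨1, one_pos, fun y hy => ?_⟩
    rw [Metric.mem_ball] at hy
    have h0 : y 0 = c 0 := by
      apply PiNat.apply_eq_of_dist_lt (n := 0) _ le_rfl
      simpa using hy
    show y 0 = false
    rw [h0]; exact hc
  have hSm : MeasurableSet S := hSopen.measurableSet
  have hsplit : μH[sBeta β] (Ebeta β x)
      = μH[sBeta β] (Ebeta β x ∩ S) + μH[sBeta β] (Ebeta β x \ S) :=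
    (measure_inter_add_diff _ hSm).symm
  have hdiff : Ebeta β x \ S = Ebeta β x ∩ {c : Sig | c 0 = true} := by
    ext c
    simp [hS, Set.mem_diff, Bool.not_eq_false]
  rw [hsplit, hdiff, Ebeta_split hβ1 x false, Ebeta_split hβ1 x true,
    haus_consB_image hs, haus_consB_image hs, const_eq hβ1 hβ2, mul_add]
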